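/- Let n, k, r, p be positive integers with 1 < p ≤ r and p ≤ k ≤ n, and set n₁ = ⌊n/r⌋·r. For every r-coloring χ of an n-element vertex set V, the number of k-element subsets of V properly (r,p) colored by χ is at most C(n,k) − Σ_{i=1}^{p−1} m(n₁,k,r,i), where m(n₁,k,r,i) = C(r,i) · Σ_{j=0}^{i} (-1)^j · C(i,j) · C((n₁/r)·(i−j), k), and C(a,b) denotes the binomial coefficient (with C(a,b) = 0 when a < b). -/

import Mathlib

open Finset

namespace Stmt4Aux

set_option linter.unusedSectionVars false


lemma neg_one_pow_sub {d u : ℕ} (h : u ≤ d) : (-1 : ℤ) ^ (d - u) = (-1) ^ d * (-1) ^ u := by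
  have : (-1 : ℤ) ^ (d - u) = (-1) ^ (d - u) * ((-1) ^ 2) ^ u := by norm_num
  rw [this, ← pow_mul, ← pow_add]
  have h2 : d - u + 2 * u = d + u := by omega
  rw [h2, pow_add]

lemma moebius_kernel {α : Type*} [DecidableEq α] (R T : Finset α) (hRT : R ⊆ T) :
    ∑ S ∈ T.powerset.filter (fun S => R ⊆ S), (-1 : ℤ) ^ (T.card - S.card)
      = if R = T then 1 else 0 := by
  have himg : T.powerset.filter (fun S => R ⊆ S)
      = (T \ R).powerset.image (fun U => R ∪ U) := by
    ext S
    simp only [mem_filter, mem_powerset, mem_image]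
    constructor
    · rintro ⟨hST, hRS⟩
      exact ⟨S \ R, sdiff_subset_sdiff hST le_rfl, union_sdiff_of_subset hRS⟩
    · rintro ⟨U, hU, rfl⟩
      exact ⟨union_subset hRT (hU.trans (sdiff_subset)), subset_union_left⟩
  have hinj : Set.InjOn (fun U => R ∪ U) ((T \ R).powerset : Set (Finset α)) := by
    intro U1 h1 U2 h2 he
    simp only [mem_coe, mem_powerset] at h1 h2
    have d1 : Disjoint R U1 := disjoint_of_subset_right h1 (disjoint_sdiff)
    have d2 : Disjoint R U2 := disjoint_of_subset_right h2 (disjoint_sdiff)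
    simp only at he
    have : (R ∪ U1) \ R = (R ∪ U2) \ R := by rw [he]
    rwa [union_sdiff_cancel_left d1, union_sdiff_cancel_left d2] at this
  rw [himg, sum_image (fun x hx y hy h => hinj hx hy h)]
  have hstep : ∀ U ∈ (T \ R).powerset,
      (-1 : ℤ) ^ (T.card - (R ∪ U).card) = (-1) ^ (T \ R).card * (-1) ^ U.card := by
    intro U hU
    rw [mem_powerset] at hU
    have hd : Disjoint R U := disjoint_of_subset_right hU (disjoint_sdiff)
    rw [card_union_of_disjoint hd]
    have h1 : T.card - (R.card + U.card) = (T \ R).card - U.card := by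
      have := card_sdiff_of_subset hRT
      omega
    have h2 : U.card ≤ (T \ R).card := card_le_card hU
    rw [h1, neg_one_pow_sub h2]
  rw [sum_congr rfl hstep, ← mul_sum, sum_powerset_neg_one_pow_card]
  by_cases h : R = T
  · subst h
    simp
  · have : T \ R ≠ ∅ := by
      rw [Ne, sdiff_eq_empty_iff_subset]
      intro hTR
      exact h (subset_antisymm hRT hTR)
    simp [this, h]

variable {V : Type*} [Fintype V] [DecidableEq V] {r : ℕ}

def imp (k t : ℕ) (χ : V → Fin r) : Finset (Finset V) :=
  ((Finset.univ : Finset V).powersetCard k).filter (fun e => (e.image χ).card ≤ t)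

lemma count_balanced (k t q : ℕ) (hk : 0 < k) (χ : V → Fin r)
    (C : Fin r → Finset V) (hCq : ∀ c, (C c).card = q)
    (hCc : ∀ c, ∀ x ∈ C c, χ x = c) :
    ((((((Finset.univ : Finset (Fin r)).biUnion C).powersetCard k).filter
        (fun e => (e.image χ).card ≤ t)).card : ℤ))
      = ∑ i ∈ Finset.Icc 1 t, (r.choose i : ℤ) *
          ∑ j ∈ Finset.range (i + 1),
            (-1 : ℤ) ^ j * (i.choose j : ℤ) * (((q * (i - j)).choose k : ℕ) : ℤ) := by
  classical
  set W : Finset (Fin r) → Finset V := fun T => T.biUnion C with hW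
  have hdisj : ∀ (T : Finset (Fin r)), ∀ c1 ∈ T, ∀ c2 ∈ T, c1 ≠ c2 → Disjoint (C c1) (C c2) := by
    intro T c1 _ c2 _ hne
    rw [Finset.disjoint_left]
    intro x h1 h2
    exact hne ((hCc c1 x h1).symm.trans (hCc c2 x h2))
  have hWcard : ∀ T : Finset (Fin r), (W T).card = q * T.card := by
    intro T
    rw [hW]
    simp only
    rw [Finset.card_biUnion (hdisj T)]
    simp [hCq, mul_comm]
  have hWsub : ∀ T, W T ⊆ W univ := by
    intro T
    exact biUnion_subset_biUnion_of_subset_left C (subset_univ T)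
  have hkey : ∀ e : Finset V, e ⊆ W univ → ∀ T, (e.image χ ⊆ T ↔ e ⊆ W T) := by
    intro e he T
    constructor
    · intro h x hx
      obtain ⟨c, _, hc⟩ := Finset.mem_biUnion.1 (he hx)
      have hxc : χ x = c := hCc c x hc
      have hcT : c ∈ T := by
        have hm : χ x ∈ e.image χ := Finset.mem_image_of_mem χ hx
        rw [hxc] at hm
        exact h hm
      exact Finset.mem_biUnion.2 ⟨c, hcT, hc⟩
    · intro h c hc
      obtain ⟨x, hx, rfl⟩ := Finset.mem_image.1 hc
      obtain ⟨c', hc', hx'⟩ := Finset.mem_biUnion.1 (h hx)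
      rw [hCc c' x hx']
      exact hc'
  set edges := (W univ).powersetCard k with hedges
  set E : Finset (Fin r) → ℕ := fun T => (edges.filter (fun e => e.image χ = T)).card with hE
  -- the fiber identity: for S ⊆ T, fibers inside (W T).powersetCard k agree with fibers in edges
  have hfib : ∀ T S : Finset (Fin r), S ⊆ T →
      ((W T).powersetCard k).filter (fun e => e.image χ = S)
        = edges.filter (fun e => e.image χ = S) := by
    intro T S hST
    ext e
    simp only [mem_filter, hedges, Finset.mem_powersetCard]
    constructor
    · rintro ⟨⟨hsub, hcard⟩, himg⟩
      exact ⟨⟨hsub.trans (hWsub T), hcard⟩, himg⟩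
    · rintro ⟨⟨hsub, hcard⟩, himg⟩
      refine ⟨⟨?_, hcard⟩, himg⟩
      rw [← hkey e hsub T, himg]
      exact hST
  have hF : ∀ T : Finset (Fin r), (q * T.card).choose k = ∑ S ∈ T.powerset, E S := by
    intro T
    have h1 : ((W T).powersetCard k).card
        = ∑ S ∈ T.powerset, (((W T).powersetCard k).filter (fun e => e.image χ = S)).card := by
      apply Finset.card_eq_sum_card_fiberwise
      intro e he
      rw [Finset.mem_coe, Finset.mem_powersetCard] at he
      rw [Finset.mem_coe, Finset.mem_powerset]
      exact (hkey e (he.1.trans (hWsub T)) T).2 he.1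
    rw [Finset.card_powersetCard, hWcard] at h1
    rw [h1]
    exact Finset.sum_congr rfl fun S hS => by rw [hfib T S (Finset.mem_powerset.1 hS)]
  -- Möbius inversion
  have hEint : ∀ T : Finset (Fin r),
      (E T : ℤ) = ∑ S ∈ T.powerset, (-1) ^ (T.card - S.card) * ((q * S.card).choose k : ℤ) := by
    intro T
    have step1 : ∑ S ∈ T.powerset, (-1 : ℤ) ^ (T.card - S.card) * ((q * S.card).choose k : ℤ)
        = ∑ S ∈ T.powerset, ∑ R ∈ S.powerset, (-1 : ℤ) ^ (T.card - S.card) * (E R : ℤ) := by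
      refine Finset.sum_congr rfl fun S _ => ?_
      rw [← Finset.mul_sum]
      congr 1
      rw [hF S]
      push_cast
      rfl
    have step2 : ∑ S ∈ T.powerset, ∑ R ∈ S.powerset, (-1 : ℤ) ^ (T.card - S.card) * (E R : ℤ)
        = ∑ R ∈ T.powerset, ∑ S ∈ T.powerset.filter (fun S => R ⊆ S),
            (-1 : ℤ) ^ (T.card - S.card) * (E R : ℤ) := by
      apply Finset.sum_comm'
      intro S R
      simp only [mem_powerset, mem_filter]
      constructor
      · rintro ⟨hST, hRS⟩
        exact ⟨⟨hST, hRS⟩, hRS.trans hST⟩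
      · rintro ⟨⟨hST, hRS⟩, _⟩
        exact ⟨hST, hRS⟩
    have step3 : ∀ R ∈ T.powerset,
        ∑ S ∈ T.powerset.filter (fun S => R ⊆ S), (-1 : ℤ) ^ (T.card - S.card) * (E R : ℤ)
          = (if R = T then 1 else 0) * (E R : ℤ) := by
      intro R hR
      rw [← Finset.sum_mul, moebius_kernel R T (Finset.mem_powerset.1 hR)]
    rw [step1, step2, Finset.sum_congr rfl step3]
    simp only [ite_mul, one_mul, zero_mul]
    rw [Finset.sum_ite_eq' T.powerset T (fun R => (E R : ℤ))]
    simp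
  -- fiberwise decomposition of the improper count by image cardinality
  have hN1 : (edges.filter (fun e => (e.image χ).card ≤ t)).card
      = ∑ i ∈ Finset.range (t + 1), (edges.filter (fun e => (e.image χ).card = i)).card := by
    have h1 : (edges.filter (fun e => (e.image χ).card ≤ t)).card
        = ∑ i ∈ Finset.range (t + 1),
            ((edges.filter (fun e => (e.image χ).card ≤ t)).filter
              (fun e => (e.image χ).card = i)).card := by
      apply Finset.card_eq_sum_card_fiberwise
      intro e he
      rw [Finset.mem_coe, Finset.mem_filter] at he
      rw [Finset.mem_coe, Finset.mem_range]
      beta_reduce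
      omega
    rw [h1]
    refine Finset.sum_congr rfl fun i hi => ?_
    rw [Finset.mem_range] at hi
    congr 1
    ext e
    simp only [Finset.mem_filter]
    constructor
    · rintro ⟨⟨he, _⟩, hc⟩; exact ⟨he, hc⟩
    · rintro ⟨he, hc⟩; exact ⟨⟨he, by omega⟩, hc⟩
  have hD : ∀ i : ℕ, (edges.filter (fun e => (e.image χ).card = i)).card
      = ∑ T ∈ Finset.powersetCard i (Finset.univ : Finset (Fin r)), E T := by
    intro i
    have h1 : (edges.filter (fun e => (e.image χ).card = i)).card
        = ∑ T ∈ Finset.powersetCard i (Finset.univ : Finset (Fin r)),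
            ((edges.filter (fun e => (e.image χ).card = i)).filter
              (fun e => e.image χ = T)).card := by
      apply Finset.card_eq_sum_card_fiberwise
      intro e he
      rw [Finset.mem_coe, Finset.mem_filter] at he
      rw [Finset.mem_coe, Finset.mem_powersetCard]
      exact ⟨Finset.subset_univ _, he.2⟩
    rw [h1]
    refine Finset.sum_congr rfl fun T hT => ?_
    rw [Finset.mem_powersetCard] at hT
    congr 1
    ext e
    simp only [Finset.mem_filter]
    constructor
    · rintro ⟨⟨he, _⟩, hc⟩; exact ⟨he, hc⟩
    · rintro ⟨he, hc⟩; exact ⟨⟨he, by rw [hc]; exact hT.2⟩, hc⟩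
  -- compute E T as a function of T.card
  have hET : ∀ i : ℕ, ∀ T ∈ Finset.powersetCard i (Finset.univ : Finset (Fin r)),
      (E T : ℤ) = ∑ j ∈ Finset.range (i + 1),
          (-1 : ℤ) ^ j * (i.choose j : ℤ) * (((q * (i - j)).choose k : ℕ) : ℤ) := by
    intro i T hT
    rw [Finset.mem_powersetCard] at hT
    have hTc : T.card = i := hT.2
    rw [hEint T]
    have grp : ∑ S ∈ T.powerset, (-1 : ℤ) ^ (T.card - S.card) * ((q * S.card).choose k : ℤ)
        = ∑ j ∈ Finset.range (i + 1),
            (i.choose j : ℤ) * ((-1) ^ (i - j) * ((q * j).choose k : ℤ)) := by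
      rw [Finset.sum_powerset]
      rw [hTc]
      refine Finset.sum_congr rfl fun j hj => ?_
      rw [Finset.mem_range] at hj
      have : ∀ S ∈ Finset.powersetCard j T, (-1 : ℤ) ^ (i - S.card) * ((q * S.card).choose k : ℤ)
          = (-1) ^ (i - j) * ((q * j).choose k : ℤ) := by
        intro S hS
        rw [Finset.mem_powersetCard] at hS
        rw [hS.2]
      rw [Finset.sum_congr rfl this, Finset.sum_const, Finset.card_powersetCard, hTc]
      simp [mul_comm, mul_assoc]
    rw [grp]
    rw [← Finset.sum_range_reflect]
    refine Finset.sum_congr rfl fun j hj => ?_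
    rw [Finset.mem_range] at hj
    have h1 : i + 1 - 1 - j = i - j := by omega
    have h2 : i - (i - j) = j := by omega
    rw [h1, h2]
    rw [Nat.choose_symm (by omega : j ≤ i)]
    ring
  -- assemble
  have hcast : ((edges.filter (fun e => (e.image χ).card ≤ t)).card : ℤ)
      = ∑ i ∈ Finset.range (t + 1), (r.choose i : ℤ) *
          ∑ j ∈ Finset.range (i + 1),
            (-1 : ℤ) ^ j * (i.choose j : ℤ) * (((q * (i - j)).choose k : ℕ) : ℤ) := by
    rw [hN1]
    push_cast
    refine Finset.sum_congr rfl fun i _ => ?_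
    rw [hD i]
    push_cast
    rw [Finset.sum_congr rfl (hET i)]
    rw [Finset.sum_const, Finset.card_powersetCard, Finset.card_univ, Fintype.card_fin]
    simp [mul_comm]
  have hzero : (r.choose 0 : ℤ) *
      (∑ j ∈ Finset.range (0 + 1),
        (-1 : ℤ) ^ j * ((0 : ℕ).choose j : ℤ) * (((q * (0 - j)).choose k : ℕ) : ℤ)) = 0 := by
    simp [Nat.choose_eq_zero_of_lt hk]
  have hIcc : Finset.Icc 1 t = (Finset.range (t + 1)).erase 0 := by
    ext x
    simp only [Finset.mem_Icc, Finset.mem_erase, Finset.mem_range]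
    omega
  show ((edges.filter (fun e => (e.image χ).card ≤ t)).card : ℤ) = _
  rw [hcast, hIcc]
  rw [← Finset.add_sum_erase (Finset.range (t + 1)) _ (Finset.mem_range.2 (Nat.succ_pos t))]
  rw [hzero, zero_add]

lemma exchange (k t : ℕ) (χ : V → Fin r) (v : V) (b : Fin r)
    (hb : b ≠ χ v)
    (hlt : (univ.filter (fun x => χ x = b)).card
        < (univ.filter (fun x => χ x = χ v)).card) :
    (imp k t (Function.update χ v b)).card ≤ (imp k t χ).card := by
  classical
  set a := χ v with ha
  set χ' := Function.update χ v b with hχ'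
  have hχ'v : χ' v = b := Function.update_self v b χ
  have hχ'x : ∀ x : V, x ≠ v → χ' x = χ x := fun x hx => Function.update_of_ne hx b χ
  set A := univ.filter (fun x => χ x = a) with hA
  set B := univ.filter (fun x => χ x = b) with hB
  have hvA : v ∈ A := by simp [hA, ha]
  have hcardBA : B.card ≤ (A.erase v).card := by
    rw [Finset.card_erase_of_mem hvA]
    omega
  obtain ⟨emb⟩ : Nonempty (↥B ↪ ↥(A.erase v)) := by
    apply Function.Embedding.nonempty_of_card_le
    rw [Fintype.card_coe, Fintype.card_coe]
    exact hcardBA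
  set ι : V → V := fun x => if h : x ∈ B then (emb ⟨x, h⟩ : V) else x with hι
  have hιmem : ∀ x ∈ B, ι x ∈ A.erase v := by
    intro x hx
    simp only [hι, dif_pos hx]
    exact (emb ⟨x, hx⟩).2
  have hιinj : ∀ x ∈ B, ∀ y ∈ B, ι x = ι y → x = y := by
    intro x hx y hy h
    simp only [hι, dif_pos hx, dif_pos hy] at h
    have := emb.injective (Subtype.ext h)
    exact congrArg Subtype.val this
  -- membership characterization of the difference set
  have hchar : ∀ e ∈ (imp k t χ') \ (imp k t χ),
      e ∈ univ.powersetCard k ∧ v ∈ e ∧ b ∈ ((e.erase v).image χ) ∧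
        a ∉ ((e.erase v).image χ) ∧ ((e.erase v).image χ).card = t := by
    intro e he
    rw [Finset.mem_sdiff, imp, imp, Finset.mem_filter, Finset.mem_filter] at he
    obtain ⟨⟨hek, he'⟩, hnot⟩ := he
    have hne : ¬ ((e.image χ).card ≤ t) := fun h => hnot ⟨hek, h⟩
    have hve : v ∈ e := by
      by_contra hv
      have : e.image χ' = e.image χ := by
        apply Finset.image_congr
        intro x hx
        exact hχ'x x (fun h => hv (h ▸ hx))
      rw [this] at he'
      exact hne he'
    set I := (e.erase v).image χ with hI
    have hgI : (e.erase v).image χ' = I := by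
      apply Finset.image_congr
      intro x hx
      exact hχ'x x (Finset.ne_of_mem_erase hx)
    have heχ : e.image χ = insert a I := by
      conv_lhs => rw [← Finset.insert_erase hve]
      rw [Finset.image_insert, ← ha]
    have heχ' : e.image χ' = insert b I := by
      conv_lhs => rw [← Finset.insert_erase hve]
      rw [Finset.image_insert, hχ'v, hgI]
    rw [heχ'] at he'
    rw [heχ] at hne
    have haI : a ∉ I := by
      intro haI
      rw [Finset.insert_eq_self.2 haI] at hne
      have : I.card ≤ (insert b I).card := Finset.card_le_card (Finset.subset_insert b I)
      omega
    have hbI : b ∈ I := by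
      by_contra hbI
      rw [Finset.card_insert_of_notMem hbI] at he'
      rw [Finset.card_insert_of_notMem haI] at hne
      omega
    have hIcard : I.card = t := by
      rw [Finset.insert_eq_self.2 hbI] at he'
      rw [Finset.card_insert_of_notMem haI] at hne
      omega
    exact ⟨hek, hve, hbI, haI, hIcard⟩
  -- the injection
  set Φ : Finset V → Finset V := fun e =>
    insert v (((e.filter (fun x => χ x ≠ b)).erase v) ∪ (e.filter (fun x => χ x = b)).image ι)
    with hΦ
  have hmain : ((imp k t χ') \ (imp k t χ)).card ≤ ((imp k t χ) \ (imp k t χ')).card := by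
    apply Finset.card_le_card_of_injOn Φ
    · -- maps into D
      intro e he
      obtain ⟨hek, hve, hbI, haI, hIcard⟩ := hchar e he
      rw [Finset.mem_powersetCard] at hek
      set g := e.erase v with hg
      set I := g.image χ with hI
      set eb := e.filter (fun x => χ x = b) with heb
      set rest := (e.filter (fun x => χ x ≠ b)).erase v with hrest
      have hrest' : rest = g.filter (fun x => χ x ≠ b) := by
        rw [hrest, hg, Finset.filter_erase]
      have heb' : eb = g.filter (fun x => χ x = b) := by
        rw [heb, hg]
        ext x
        simp only [Finset.mem_filter, Finset.mem_erase]
        constructor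
        · rintro ⟨hxe, hxb⟩
          refine ⟨⟨?_, hxe⟩, hxb⟩
          rintro rfl
          exact hb hxb.symm
        · rintro ⟨⟨_, hxe⟩, hxb⟩
          exact ⟨hxe, hxb⟩
      have hebB : ∀ x ∈ eb, x ∈ B := by
        intro x hx
        rw [heb, Finset.mem_filter] at hx
        simp [hB, hx.2]
      -- v not in the union, disjointness, cards
      have hvrest : v ∉ rest := Finset.notMem_erase v _
      have hvebι : v ∉ eb.image ι := by
        intro hv
        obtain ⟨x, hx, hxv⟩ := Finset.mem_image.1 hv
        have := hιmem x (hebB x hx)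
        rw [hxv] at this
        exact (Finset.ne_of_mem_erase this) rfl
      have hrestNa : ∀ x ∈ rest, χ x ≠ a := by
        intro x hx hxa
        apply haI
        rw [← hxa]
        apply Finset.mem_image_of_mem
        rw [hrest'] at hx
        exact Finset.mem_of_mem_filter x hx
      have hebιa : ∀ y ∈ eb.image ι, χ y = a := by
        intro y hy
        obtain ⟨x, hx, rfl⟩ := Finset.mem_image.1 hy
        have := Finset.mem_of_mem_erase (hιmem x (hebB x hx))
        rw [hA, Finset.mem_filter] at this
        exact this.2
      have hdisj : Disjoint rest (eb.image ι) := by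
        rw [Finset.disjoint_left]
        intro x hx hx'
        exact hrestNa x hx (hebιa x hx')
      have hcards : (rest ∪ eb.image ι).card = k - 1 := by
        rw [Finset.card_union_of_disjoint hdisj]
        have h1 : (eb.image ι).card = eb.card := by
          apply Finset.card_image_of_injOn
          intro x hx y hy hxy
          exact hιinj x (hebB x (by exact hx)) y (hebB y hy) hxy
        have h2 : rest.card + eb.card = g.card := by
          rw [hrest', heb']
          rw [add_comm]
          exact Finset.card_filter_add_card_filter_not (fun x => χ x = b)
        have h3 : g.card = k - 1 := by
          rw [hg, Finset.card_erase_of_mem hve, hek.2]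
        omega
      have hΦcard : (Φ e).card = k := by
        rw [hΦ]
        simp only
        rw [Finset.card_insert_of_notMem (by
          rw [Finset.mem_union]
          push_neg
          exact ⟨hvrest, hvebι⟩)]
        rw [hcards]
        have : 1 ≤ k := by
          have := hek.2
          have : v ∈ e := hve
          have hpos : 0 < e.card := Finset.card_pos.2 ⟨v, hve⟩
          omega
        omega
      -- image computation
      have hrestimg : rest.image χ = I.erase b := by
        rw [hrest']
        have h := Finset.filter_image (s := g) (f := χ) (p := fun c => c ≠ b)
        rw [Finset.filter_ne'] at h
        exact h.symm
      have hebne : eb.Nonempty := by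
        obtain ⟨x, hx, hxb⟩ := Finset.mem_image.1 hbI
        refine ⟨x, ?_⟩
        rw [heb', Finset.mem_filter]
        exact ⟨hx, hxb⟩
      have hebιimg : (eb.image ι).image χ = {a} := by
        apply Finset.eq_singleton_iff_unique_mem.2
        constructor
        · obtain ⟨x, hx⟩ := hebne
          have : ι x ∈ eb.image ι := Finset.mem_image_of_mem ι hx
          have h2 : χ (ι x) = a := hebιa _ this
          rw [← h2]
          exact Finset.mem_image_of_mem χ this
        · intro y hy
          obtain ⟨z, hz, rfl⟩ := Finset.mem_image.1 hy
          exact hebιa z hz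
      have hΦimg : (Φ e).image χ = insert a (I.erase b) := by
        rw [hΦ]
        simp only
        rw [Finset.image_insert, Finset.image_union, hrestimg, hebιimg, ← ha]
        ext c
        simp only [Finset.mem_insert, Finset.mem_union, Finset.mem_singleton]
        tauto
      have haIb : a ∉ I.erase b := fun h => haI (Finset.mem_of_mem_erase h)
      have hΦimgcard : ((Φ e).image χ).card = t := by
        rw [hΦimg, Finset.card_insert_of_notMem haIb, Finset.card_erase_of_mem hbI, hIcard]
        have : 1 ≤ t := by
          have : I.Nonempty := ⟨b, hbI⟩
          have := Finset.card_pos.2 this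
          omega
        omega
      -- image under χ'
      have hΦv : v ∉ rest ∪ eb.image ι := by
        rw [Finset.mem_union]
        push_neg
        exact ⟨hvrest, hvebι⟩
      have hΦimg' : (Φ e).image χ' = insert b ((I.erase b) ∪ {a}) := by
        rw [hΦ]
        simp only
        rw [Finset.image_insert, hχ'v]
        congr 1
        have : (rest ∪ eb.image ι).image χ' = (rest ∪ eb.image ι).image χ := by
          apply Finset.image_congr
          intro x hx
          apply hχ'x
          rintro rfl
          exact hΦv hx
        rw [this, Finset.image_union, hrestimg, hebιimg]
      have hΦimg'card : ((Φ e).image χ').card = t + 1 := by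
        rw [hΦimg']
        have hbno : b ∉ (I.erase b) ∪ {a} := by
          rw [Finset.mem_union]
          push_neg
          refine ⟨Finset.notMem_erase b I, ?_⟩
          rw [Finset.mem_singleton]
          exact hb
        rw [Finset.card_insert_of_notMem hbno, Finset.card_union_of_disjoint (by
          rw [Finset.disjoint_right]
          intro x hx
          rw [Finset.mem_singleton] at hx
          subst hx
          exact haIb), Finset.card_erase_of_mem hbI, hIcard, Finset.card_singleton]
        have : 1 ≤ t := by
          have := Finset.card_pos.2 ⟨b, hbI⟩
          omega
        omega
      rw [Finset.mem_coe, Finset.mem_sdiff, imp, imp, Finset.mem_filter, Finset.mem_filter]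
      refine ⟨⟨?_, by rw [hΦimgcard]⟩, ?_⟩
      · rw [Finset.mem_powersetCard]
        exact ⟨Finset.subset_univ _, hΦcard⟩
      · rintro ⟨_, hle⟩
        rw [hΦimg'card] at hle
        omega
    · -- injectivity
      intro e1 he1 e2 he2 heq
      simp only [Finset.mem_coe] at he1 he2
      obtain ⟨hek1, hve1, hbI1, haI1, _⟩ := hchar e1 he1
      obtain ⟨hek2, hve2, hbI2, haI2, _⟩ := hchar e2 he2
      -- recover eb and rest from Φ e
      have recover : ∀ e : Finset V, e ∈ univ.powersetCard k → v ∈ e →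
          a ∉ ((e.erase v).image χ) →
          (Φ e).filter (fun x => χ x = a) = insert v ((e.filter (fun x => χ x = b)).image ι) ∧
          ((Φ e).erase v).filter (fun x => χ x ≠ a) = (e.filter (fun x => χ x ≠ b)).erase v := by
        intro e hek hve haI
        set eb := e.filter (fun x => χ x = b) with heb
        set rest := (e.filter (fun x => χ x ≠ b)).erase v with hrest
        have hebB : ∀ x ∈ eb, x ∈ B := by
          intro x hx
          rw [heb, Finset.mem_filter] at hx
          simp [hB, hx.2]
        have hebιa : ∀ y ∈ eb.image ι, χ y = a := by
          intro y hy
          obtain ⟨x, hx, rfl⟩ := Finset.mem_image.1 hy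
          have := Finset.mem_of_mem_erase (hιmem x (hebB x hx))
          rw [hA, Finset.mem_filter] at this
          exact this.2
        have hrestNa : ∀ x ∈ rest, χ x ≠ a := by
          intro x hx hxa
          apply haI
          rw [← hxa]
          apply Finset.mem_image_of_mem
          rw [hrest, Finset.mem_erase, Finset.mem_filter] at hx
          exact Finset.mem_erase.2 ⟨hx.1, hx.2.1⟩
        have hvrest : v ∉ rest := Finset.notMem_erase v _
        have hvebι : v ∉ eb.image ι := by
          intro hv
          obtain ⟨x, hx, hxv⟩ := Finset.mem_image.1 hv
          have := hιmem x (hebB x hx)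
          rw [hxv] at this
          exact (Finset.ne_of_mem_erase this) rfl
        constructor
        · ext x
          simp only [hΦ, Finset.mem_filter, Finset.mem_insert, Finset.mem_union]
          constructor
          · rintro ⟨hx | hx, hxa⟩
            · exact Or.inl hx
            · rcases hx with hx | hx
              · exact absurd hxa (hrestNa x hx)
              · exact Or.inr hx
          · rintro (rfl | hx)
            · exact ⟨Or.inl rfl, ha.symm⟩
            · exact ⟨Or.inr (Or.inr hx), hebιa x hx⟩
        · have herase : (Φ e).erase v = rest ∪ eb.image ι := by
            rw [hΦ]
            simp only
            apply Finset.erase_insert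
            rw [Finset.mem_union]
            push_neg
            exact ⟨hvrest, hvebι⟩
          rw [herase]
          ext x
          simp only [Finset.mem_filter, Finset.mem_union]
          constructor
          · rintro ⟨hx | hx, hxa⟩
            · exact hx
            · exact absurd (hebιa x hx) hxa
          · intro hx
            exact ⟨Or.inl hx, hrestNa x hx⟩
      obtain ⟨hr1a, hr1b⟩ := recover e1 hek1 hve1 haI1
      obtain ⟨hr2a, hr2b⟩ := recover e2 hek2 hve2 haI2
      rw [heq] at hr1a hr1b
      -- equate images then eb's
      have hebι : (e1.filter (fun x => χ x = b)).image ι = (e2.filter (fun x => χ x = b)).image ι := by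
        have h1 : v ∉ (e1.filter (fun x => χ x = b)).image ι := by
          intro hv
          obtain ⟨x, hx, hxv⟩ := Finset.mem_image.1 hv
          have hxB : x ∈ B := by
            rw [Finset.mem_filter] at hx
            simp [hB, hx.2]
          have := hιmem x hxB
          rw [hxv] at this
          exact (Finset.ne_of_mem_erase this) rfl
        have h2 : v ∉ (e2.filter (fun x => χ x = b)).image ι := by
          intro hv
          obtain ⟨x, hx, hxv⟩ := Finset.mem_image.1 hv
          have hxB : x ∈ B := by
            rw [Finset.mem_filter] at hx
            simp [hB, hx.2]
          have := hιmem x hxB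
          rw [hxv] at this
          exact (Finset.ne_of_mem_erase this) rfl
        have := hr1a.symm.trans hr2a
        have h3 := congrArg (fun s => Finset.erase s v) this
        rwa [Finset.erase_insert h1, Finset.erase_insert h2] at h3
      have heb12 : e1.filter (fun x => χ x = b) = e2.filter (fun x => χ x = b) := by
        ext x
        constructor
        · intro hx
          have hxB : x ∈ B := by
            rw [Finset.mem_filter] at hx
            simp [hB, hx.2]
          have : ι x ∈ (e2.filter (fun x => χ x = b)).image ι := by
            rw [← hebι]
            exact Finset.mem_image_of_mem ι hx
          obtain ⟨y, hy, hyx⟩ := Finset.mem_image.1 this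
          have hyB : y ∈ B := by
            rw [Finset.mem_filter] at hy
            simp [hB, hy.2]
          rwa [← hιinj y hyB x hxB hyx]
        · intro hx
          have hxB : x ∈ B := by
            rw [Finset.mem_filter] at hx
            simp [hB, hx.2]
          have : ι x ∈ (e1.filter (fun x => χ x = b)).image ι := by
            rw [hebι]
            exact Finset.mem_image_of_mem ι hx
          obtain ⟨y, hy, hyx⟩ := Finset.mem_image.1 this
          have hyB : y ∈ B := by
            rw [Finset.mem_filter] at hy
            simp [hB, hy.2]
          rwa [← hιinj y hyB x hxB hyx]
      have hrest12 : (e1.filter (fun x => χ x ≠ b)).erase v = (e2.filter (fun x => χ x ≠ b)).erase v :=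
        hr1b.symm.trans hr2b
      -- reconstruct e
      have hrec : ∀ e : Finset V, v ∈ e →
          e = insert v (((e.filter (fun x => χ x ≠ b)).erase v) ∪ e.filter (fun x => χ x = b)) := by
        intro e hve
        ext x
        simp only [Finset.mem_insert, Finset.mem_union, Finset.mem_erase, Finset.mem_filter]
        constructor
        · intro hx
          by_cases hxv : x = v
          · exact Or.inl hxv
          · by_cases hxb : χ x = b
            · exact Or.inr (Or.inr ⟨hx, hxb⟩)
            · exact Or.inr (Or.inl ⟨hxv, hx, hxb⟩)
        · rintro (rfl | ⟨_, hx, _⟩ | ⟨hx, _⟩) <;> [exact hve; exact hx; exact hx]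
      rw [hrec e1 hve1, hrec e2 hve2, hrest12, heb12]
  have h1 := Finset.card_inter_add_card_sdiff (imp k t χ') (imp k t χ)
  have h2 := Finset.card_inter_add_card_sdiff (imp k t χ) (imp k t χ')
  rw [Finset.inter_comm] at h2
  omega

lemma balanced_case (k t q : ℕ) (hk : 0 < k) (χ : V → Fin r)
    (hcl : ∀ c : Fin r, q ≤ (univ.filter (fun x => χ x = c)).card) :
    (∑ i ∈ Finset.Icc 1 t, (r.choose i : ℤ) * ∑ j ∈ Finset.range (i + 1),
        (-1 : ℤ) ^ j * (i.choose j : ℤ) * (((q * (i - j)).choose k : ℕ) : ℤ))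
      ≤ ((imp k t χ).card : ℤ) := by
  classical
  choose C hCsub hCcard using fun c : Fin r => Finset.exists_subset_card_eq (hcl c)
  have hCc : ∀ c : Fin r, ∀ x ∈ C c, χ x = c := by
    intro c x hx
    have h := hCsub c hx
    rw [Finset.mem_filter] at h
    exact h.2
  rw [← count_balanced k t q hk χ C hCcard hCc]
  have hsub : (((Finset.univ : Finset (Fin r)).biUnion C).powersetCard k).filter
      (fun e => (e.image χ).card ≤ t) ⊆ imp k t χ := by
    intro e he
    rw [Finset.mem_filter, Finset.mem_powersetCard] at he
    rw [imp, Finset.mem_filter, Finset.mem_powersetCard]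
    exact ⟨⟨Finset.subset_univ _, he.1.2⟩, he.2⟩
  exact_mod_cast Finset.card_le_card hsub

lemma main_lb (k t q : ℕ) (hk : 0 < k) (hq : q * r ≤ Fintype.card V)
    (χ : V → Fin r) :
    (∑ i ∈ Finset.Icc 1 t, (r.choose i : ℤ) *
          ∑ j ∈ Finset.range (i + 1),
            (-1 : ℤ) ^ j * (i.choose j : ℤ) * (((q * (i - j)).choose k : ℕ) : ℤ))
      ≤ ((imp k t χ).card : ℤ) := by
  classical
  suffices h : ∀ (m : ℕ) (χ : V → Fin r),
      (∑ c : Fin r, (q - (univ.filter (fun x => χ x = c)).card)) ≤ m →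
      (∑ i ∈ Finset.Icc 1 t, (r.choose i : ℤ) *
          ∑ j ∈ Finset.range (i + 1),
            (-1 : ℤ) ^ j * (i.choose j : ℤ) * (((q * (i - j)).choose k : ℕ) : ℤ))
        ≤ ((imp k t χ).card : ℤ) by
    exact h _ χ le_rfl
  intro m
  induction m with
  | zero =>
    intro χ hμ
    apply balanced_case k t q hk χ
    intro c
    have h0 := Finset.sum_eq_zero_iff.1 (Nat.le_zero.1 hμ) c (Finset.mem_univ c)
    omega
  | succ m ih =>
    intro χ hμ
    by_cases hbal : ∀ c : Fin r, q ≤ (univ.filter (fun x => χ x = c)).card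
    · exact balanced_case k t q hk χ hbal
    · push_neg at hbal
      obtain ⟨c0, hc0⟩ := hbal
      have hsumcl : ∑ c : Fin r, (univ.filter (fun x => χ x = c)).card = Fintype.card V := by
        rw [← Finset.card_univ]
        exact (Finset.card_eq_sum_card_fiberwise (fun x _ => Finset.mem_univ (χ x))).symm
      have hbig : ∃ c1 : Fin r, q < (univ.filter (fun x => χ x = c1)).card := by
        by_contra hall
        push_neg at hall
        have hlt2 : ∑ c : Fin r, (univ.filter (fun x => χ x = c)).card
            < ∑ _c : Fin r, q := by
          apply Finset.sum_lt_sum (fun c _ => hall c) ⟨c0, Finset.mem_univ c0, hc0⟩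
        rw [Finset.sum_const, Finset.card_univ, Fintype.card_fin, smul_eq_mul,
          mul_comm] at hlt2
        rw [hsumcl] at hlt2
        exact absurd hq (not_le.2 hlt2)
      obtain ⟨c1, hc1⟩ := hbig
      have hne : c0 ≠ c1 := fun h => by rw [h] at hc0; omega
      obtain ⟨v, hv⟩ : (univ.filter (fun x => χ x = c1)).Nonempty :=
        Finset.card_pos.1 (by omega)
      have hχv : χ v = c1 := (Finset.mem_filter.1 hv).2
      have hbne : c0 ≠ χ v := by rw [hχv]; exact hne
      have hblt : (univ.filter (fun x => χ x = c0)).card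
          < (univ.filter (fun x => χ x = χ v)).card := by
        rw [hχv]; omega
      have hexch := exchange k t χ v c0 hbne hblt
      refine le_trans (ih (Function.update χ v c0) ?_) (by exact_mod_cast hexch)
      have hupd : ∀ d : Fin r, univ.filter (fun x => Function.update χ v c0 x = d)
          = if d = c0 then insert v (univ.filter (fun x => χ x = d))
            else (univ.filter (fun x => χ x = d)).erase v := by
        intro d
        ext x
        simp only [Finset.mem_filter, Finset.mem_univ, true_and, Function.update_apply]
        by_cases hd : d = c0
        · subst hd
          rw [if_pos rfl, Finset.mem_insert]
          by_cases hx : x = v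
          · subst hx; simp
          · simp [hx, Finset.mem_filter]
        · rw [if_neg hd, Finset.mem_erase]
          by_cases hx : x = v
          · subst hx
            rw [if_pos rfl]
            constructor
            · intro h; exact absurd h.symm hd
            · intro h; exact absurd rfl h.1
          · simp [hx, Finset.mem_filter]
      have hcard' : ∀ d : Fin r, (univ.filter (fun x => Function.update χ v c0 x = d)).card
          = if d = c0 then (univ.filter (fun x => χ x = d)).card + 1
            else if d = c1 then (univ.filter (fun x => χ x = d)).card - 1
            else (univ.filter (fun x => χ x = d)).card := by
        intro d
        rw [hupd d]
        by_cases hd : d = c0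
        · subst hd
          rw [if_pos rfl, if_pos rfl, Finset.card_insert_of_notMem]
          intro h
          exact hbne (Finset.mem_filter.1 h).2.symm
        · rw [if_neg hd, if_neg hd]
          by_cases hd1 : d = c1
          · subst hd1
            rw [if_pos rfl, Finset.card_erase_of_mem hv]
          · rw [if_neg hd1, Finset.erase_eq_of_notMem]
            intro h
            have h2 := (Finset.mem_filter.1 h).2
            rw [hχv] at h2
            exact hd1 h2.symm
      have hdec : ∑ c : Fin r, (q - (univ.filter (fun x => Function.update χ v c0 x = c)).card)
          < ∑ c : Fin r, (q - (univ.filter (fun x => χ x = c)).card) := by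
        apply Finset.sum_lt_sum
        · intro d _
          rw [hcard' d]
          by_cases hd : d = c0
          · subst hd; rw [if_pos rfl]; omega
          · rw [if_neg hd]
            by_cases hd1 : d = c1
            · subst hd1; rw [if_pos rfl]
              have := hc1
              omega
            · rw [if_neg hd1]
        · refine ⟨c0, Finset.mem_univ c0, ?_⟩
          rw [hcard' c0, if_pos rfl]
          omega
      omega


end Stmt4Aux

/-- Upper bound: with `n₁ = ⌊n/r⌋·r`, for every `r`-coloring of an `n`-element vertex set,
the number of properly `(r,p)` colored `k`-element subsets is at most
`C(n,k) − Σ_{i=1}^{p-1} m(n₁,k,r,i)`. -/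
theorem stmt_4 (n k r p : ℕ) (hn : 0 < n) (hk : 0 < k) (hr : 0 < r) (hp : 1 < p)
    (hpr : p ≤ r) (hpk : p ≤ k) (hkn : k ≤ n)
    (V : Type*) [Fintype V] [DecidableEq V] (hV : Fintype.card V = n)
    (χ : V → Fin r) :
    ((((Finset.univ : Finset V).powersetCard k).filter
        (fun e : Finset V => p ≤ (e.image χ).card)).card : ℤ) ≤
      (n.choose k : ℤ) -
        ∑ i ∈ Finset.Icc 1 (p - 1),
          (r.choose i : ℤ) *
            ∑ j ∈ Finset.range (i + 1),
              (-1 : ℤ) ^ j * (i.choose j : ℤ) *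
                ((((n / r * r) / r * (i - j)).choose k : ℕ) : ℤ) := by
  classical
  have hq : (n / r) * r ≤ Fintype.card V := by
    rw [hV]
    exact Nat.div_mul_le_self n r
  have hmain := Stmt4Aux.main_lb k (p - 1) (n / r) hk hq χ
  have hsplit : (((Finset.univ : Finset V).powersetCard k).filter
        (fun e : Finset V => p ≤ (e.image χ).card)).card
      + (Stmt4Aux.imp k (p - 1) χ).card = n.choose k := by
    have h1 : Stmt4Aux.imp k (p - 1) χ
        = ((Finset.univ : Finset V).powersetCard k).filter
            (fun e => ¬ p ≤ (e.image χ).card) := by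
      rw [Stmt4Aux.imp]
      apply Finset.filter_congr
      intro e _
      simp only [not_le]
      omega
    rw [h1, Finset.card_filter_add_card_filter_not, Finset.card_powersetCard,
      Finset.card_univ, hV]
  have hdiv : n / r * r / r = n / r := Nat.mul_div_cancel _ hr
  simp only [hdiv]
  have hs : ((((Finset.univ : Finset V).powersetCard k).filter
        (fun e : Finset V => p ≤ (e.image χ).card)).card : ℤ)
      + ((Stmt4Aux.imp k (p - 1) χ).card : ℤ) = (n.choose k : ℤ) := by
    exact_mod_cast hsplit
  linarith [hmain]
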